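/- Let ε > 0, let b ≥ 1, v ≥ 2 and 1 ≤ k ≤ v−1 be integers, and let s > 0. Let Q be a b×v real matrix such that every entry of Q lies in {s, s·e^ε}, every column of Q sums to 1, and every row of Q has exactly k entries equal to s·e^ε. Then s = v/(b(v + k(e^ε − 1))), and b·tr(QᵀQ) = f(k), where f(x) = v²(x·e^{2ε} + v − x)/((x(e^ε − 1) + v)²). Equivalently, since the induced output distribution under uniform input is uniform on b elements (so D_μ⁻¹ = b·I_b), one has tr(Qᵀ·D_μ⁻¹·Q) = f(k). -/

import Mathlib

open Matrix Finset Real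

/-- for a binary-valued ε-LDP transition probability matrix (entries in
`{s, s·e^ε}`, column sums 1, exactly `k` large entries in each row) one has
`s = v/(b(v + k(e^ε-1)))` and `b·tr(QᵀQ) = f(k)` where
`f(x) = v²(x·e^{2ε} + v - x)/((x(e^ε-1) + v)²)`; equivalently, with `μ = Q·(1/v)·1_v`
the (uniform) induced output distribution, `tr(Qᵀ·D_μ⁻¹·Q) = f(k)`. -/
theorem stmt_13 (ε : ℝ) (hε : 0 < ε) (b v k : ℕ) (hb : 1 ≤ b) (hv : 2 ≤ v)
    (hk1 : 1 ≤ k) (hkv : k ≤ v - 1) (s : ℝ) (hs : 0 < s)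
    (Q : Matrix (Fin b) (Fin v) ℝ)
    (hent : ∀ i j, Q i j = s ∨ Q i j = s * Real.exp ε)
    (hcol : ∀ j, ∑ i, Q i j = 1)
    (hrow : ∀ i, (Finset.univ.filter fun j => Q i j = s * Real.exp ε).card = k) :
    let f : ℝ → ℝ := fun x =>
      (v : ℝ) ^ 2 * (x * Real.exp (2 * ε) + (v : ℝ) - x) / ((x * (Real.exp ε - 1) + v) ^ 2)
    s = (v : ℝ) / ((b : ℝ) * ((v : ℝ) + (k : ℝ) * (Real.exp ε - 1))) ∧
    (b : ℝ) * (Qᵀ * Q).trace = f k ∧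
    (Qᵀ * (Matrix.diagonal (Q.mulVec fun _ => (1 : ℝ) / v))⁻¹ * Q).trace = f k := by
  intro f
  have hE1 : (1 : ℝ) < Real.exp ε := by nlinarith [Real.add_one_le_exp ε]
  have hkvn : k < v := by omega
  have hkv' : (k : ℝ) < (v : ℝ) := by exact_mod_cast hkvn
  have hden : 0 < (v : ℝ) + (k : ℝ) * (Real.exp ε - 1) := by
    have : (0:ℝ) ≤ (k:ℝ) := Nat.cast_nonneg k
    nlinarith
  have hbpos : (0:ℝ) < (b:ℝ) := by exact_mod_cast hb
  have hvpos : (0:ℝ) < (v:ℝ) := by positivity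
  have hcardc : ∀ i, (Finset.univ.filter fun j => ¬ Q i j = s * Real.exp ε).card = v - k := by
    intro i
    have := Finset.card_filter_add_card_filter_not (s := (Finset.univ : Finset (Fin v)))
      (p := fun j => Q i j = s * Real.exp ε)
    simp only [Finset.card_univ, Fintype.card_fin, hrow i] at this
    omega
  have hsmall : ∀ i j, ¬ Q i j = s * Real.exp ε → Q i j = s := by
    intro i j h
    rcases hent i j with h' | h'
    · exact h'
    · exact absurd h' h
  have hcast : ((v - k : ℕ) : ℝ) = (v:ℝ) - (k:ℝ) := by
    push_cast [hkvn.le]; ring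
  have hrowsum : ∀ i, ∑ j, Q i j = s * ((v:ℝ) + (k:ℝ) * (Real.exp ε - 1)) := by
    intro i
    rw [← Finset.sum_filter_add_sum_filter_not Finset.univ (fun j => Q i j = s * Real.exp ε)]
    have h1 : ∀ j ∈ Finset.univ.filter (fun j => Q i j = s * Real.exp ε),
        Q i j = s * Real.exp ε := fun j hj => (Finset.mem_filter.mp hj).2
    have h2 : ∀ j ∈ Finset.univ.filter (fun j => ¬ Q i j = s * Real.exp ε),
        Q i j = s := fun j hj => hsmall i j (Finset.mem_filter.mp hj).2
    rw [Finset.sum_congr rfl h1, Finset.sum_congr rfl h2, Finset.sum_const, Finset.sum_const,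
      hrow i, hcardc i, nsmul_eq_mul, nsmul_eq_mul, hcast]
    ring
  have hE2 : Real.exp (2 * ε) = Real.exp ε * Real.exp ε := by
    rw [two_mul, Real.exp_add]
  have hrowsq : ∀ i, ∑ j, Q i j ^ 2
      = s ^ 2 * ((k:ℝ) * Real.exp (2 * ε) + ((v:ℝ) - (k:ℝ))) := by
    intro i
    rw [← Finset.sum_filter_add_sum_filter_not Finset.univ (fun j => Q i j = s * Real.exp ε)]
    have h1 : ∀ j ∈ Finset.univ.filter (fun j => Q i j = s * Real.exp ε),
        Q i j ^ 2 = (s * Real.exp ε) ^ 2 := fun j hj => by rw [(Finset.mem_filter.mp hj).2]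
    have h2 : ∀ j ∈ Finset.univ.filter (fun j => ¬ Q i j = s * Real.exp ε),
        Q i j ^ 2 = s ^ 2 := fun j hj => by rw [hsmall i j (Finset.mem_filter.mp hj).2]
    rw [Finset.sum_congr rfl h1, Finset.sum_congr rfl h2, Finset.sum_const, Finset.sum_const,
      hrow i, hcardc i, nsmul_eq_mul, nsmul_eq_mul, hcast, hE2]
    ring
  have htot : (b:ℝ) * (s * ((v:ℝ) + (k:ℝ) * (Real.exp ε - 1))) = (v:ℝ) := by
    have h1 : ∑ i : Fin b, ∑ j : Fin v, Q i j = (v:ℝ) := by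
      rw [Finset.sum_comm (f := fun (i : Fin b) (j : Fin v) => Q i j)]
      simp [hcol]
    rw [Finset.sum_congr rfl (fun i _ => hrowsum i), Finset.sum_const] at h1
    simpa [Finset.card_univ, mul_assoc] using h1
  have hsval : s = (v : ℝ) / ((b : ℝ) * ((v : ℝ) + (k : ℝ) * (Real.exp ε - 1))) := by
    rw [eq_div_iff (by positivity)]
    linear_combination htot
  have htr : (Qᵀ * Q).trace = (b:ℝ) * (s ^ 2 * ((k:ℝ) * Real.exp (2 * ε) + ((v:ℝ) - (k:ℝ)))) := by
    have h0 : (Qᵀ * Q).trace = ∑ j : Fin v, ∑ i : Fin b, Q i j ^ 2 := by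
      simp [Matrix.trace, Matrix.mul_apply, Matrix.diag, sq]
    rw [h0, Finset.sum_comm]
    rw [Finset.sum_congr rfl (fun i _ => hrowsq i), Finset.sum_const, Finset.card_univ]
    simp [nsmul_eq_mul]
  have hmain : (b : ℝ) * (Qᵀ * Q).trace = f k := by
    simp only [f]
    rw [htr, hsval]
    have h1 : ((b : ℝ) * ((v : ℝ) + (k : ℝ) * (Real.exp ε - 1))) ≠ 0 := by positivity
    have h2 : ((k:ℝ) * (Real.exp ε - 1) + (v:ℝ)) ≠ 0 := by
      intro h; apply hden.ne'; linarith
    field_simp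
    ring
  refine ⟨hsval, hmain, ?_⟩
  have hmu : (Q.mulVec fun _ => (1 : ℝ) / v) = fun _ => 1 / (b:ℝ) := by
    funext i
    simp only [Matrix.mulVec, dotProduct]
    rw [show ∑ j, Q i j * (1 / (v:ℝ)) = (∑ j, Q i j) * (1 / (v:ℝ)) from (Finset.sum_mul ..).symm]
    rw [hrowsum i]
    field_simp
    linear_combination htot
  rw [hmu]
  have hdiag : (Matrix.diagonal (fun _ : Fin b => 1 / (b:ℝ)))⁻¹
      = Matrix.diagonal (fun _ : Fin b => (b:ℝ)) := by
    apply Matrix.inv_eq_right_inv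
    rw [Matrix.diagonal_mul_diagonal]
    rw [show (fun i : Fin b => 1/(b:ℝ) * (b:ℝ)) = fun _ => (1:ℝ) from
      funext fun i => by field_simp]
    exact Matrix.diagonal_one
  rw [hdiag]
  have hsm : Matrix.diagonal (fun _ : Fin b => (b:ℝ)) = (b:ℝ) • (1 : Matrix (Fin b) (Fin b) ℝ) := by
    rw [Matrix.smul_one_eq_diagonal]
  rw [hsm, Matrix.mul_smul, Matrix.mul_one, Matrix.smul_mul, Matrix.trace_smul]
  simpa [smul_eq_mul] using hmain
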